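/- Let X⋆ ∈ ℝ^{n1×n2}, and let L ∈ ℝ^{n1×r} and R ∈ ℝ^{n2×r} have full column rank r (so LᵀL and RᵀR are positive definite). Let D1 ∈ ℝ^{n1×r} and D2 ∈ ℝ^{n2×r}. Set E := L Rᵀ − X⋆, ‖D‖_P := ( ‖D1 (RᵀR)^{1/2}‖_F² + ‖D2 (LᵀL)^{1/2}‖_F² )^{1/2}, and σ_min := min( λ_min(LᵀL)^{1/2}, λ_min(RᵀR)^{1/2} ). Then (1/2)‖(L + D1)(R + D2)ᵀ − X⋆‖_F² ≤ (1/2)‖E‖_F² + ⟨E, D1 Rᵀ + L D2ᵀ⟩_F + (C_P/2)‖D‖_P², where C_P := 2 + ‖D‖_P²/(2 σ_min⁴) + √2 ‖E‖_F/σ_min² + 2‖D‖_P/σ_min². -/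

import Mathlib

open Matrix

/-- Frobenius inner product of two real matrices. -/
noncomputable def finner {m n : Type*} [Fintype m] [Fintype n]
    (A B : Matrix m n ℝ) : ℝ := (Aᵀ * B).trace

/-- Frobenius norm of a real matrix. -/
noncomputable def fnorm {m n : Type*} [Fintype m] [Fintype n]
    (A : Matrix m n ℝ) : ℝ := Real.sqrt (finner A A)

open scoped Classical in
/-- Square root of a positive semidefinite real matrix (junk value `0` otherwise). -/
noncomputable def psqrt {r : ℕ} (M : Matrix (Fin r) (Fin r) ℝ) : Matrix (Fin r) (Fin r) ℝ :=
  if h : M.PosSemidef then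
    (h.1.eigenvectorUnitary : Matrix (Fin r) (Fin r) ℝ) * diagonal (Real.sqrt ∘ h.1.eigenvalues) *
      (star h.1.eigenvectorUnitary : Matrix (Fin r) (Fin r) ℝ)
  else 0

open scoped Classical in
/-- Smallest eigenvalue of a symmetric real matrix (junk value `0` otherwise). -/
noncomputable def lammin {r : ℕ} (M : Matrix (Fin r) (Fin r) ℝ) : ℝ :=
  if h : M.IsHermitian then ⨅ i, h.eigenvalues i else 0

open scoped Classical in
/-- Largest eigenvalue of a symmetric real matrix (junk value `0` otherwise). -/
noncomputable def lammax {r : ℕ} (M : Matrix (Fin r) (Fin r) ℝ) : ℝ :=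
  if h : M.IsHermitian then ⨆ i, h.eigenvalues i else 0

section aux

variable {m n p : Type*} [Fintype m] [Fintype n] [Fintype p]

lemma finner_eq_sum (A B : Matrix m n ℝ) :
    finner A B = ∑ j, ∑ i, A i j * B i j := by
  simp [finner, Matrix.trace, Matrix.mul_apply, Matrix.diag, Matrix.transpose_apply]

lemma finner_self_nonneg (A : Matrix m n ℝ) : 0 ≤ finner A A := by
  rw [finner_eq_sum]
  exact Finset.sum_nonneg fun j _ => Finset.sum_nonneg fun i _ => mul_self_nonneg _

lemma fnorm_nonneg (A : Matrix m n ℝ) : 0 ≤ fnorm A := Real.sqrt_nonneg _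

lemma fnorm_sq (A : Matrix m n ℝ) : fnorm A ^ 2 = finner A A :=
  Real.sq_sqrt (finner_self_nonneg A)

lemma finner_comm (A B : Matrix m n ℝ) : finner A B = finner B A := by
  simp [finner_eq_sum, mul_comm]

lemma finner_add_right (A B C : Matrix m n ℝ) :
    finner A (B + C) = finner A B + finner A C := by
  simp [finner_eq_sum, Matrix.add_apply, mul_add, Finset.sum_add_distrib]

lemma finner_add_left (A B C : Matrix m n ℝ) :
    finner (A + B) C = finner A C + finner B C := by
  simp [finner_eq_sum, Matrix.add_apply, add_mul, Finset.sum_add_distrib]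

lemma finner_prod_sum (A B : Matrix m n ℝ) :
    finner A B = ∑ q : n × m, A q.2 q.1 * B q.2 q.1 := by
  rw [finner_eq_sum, Fintype.sum_prod_type]

lemma finner_le_fnorm_mul (A B : Matrix m n ℝ) : finner A B ≤ fnorm A * fnorm B := by
  have key : finner A B ^ 2 ≤ finner A A * finner B B := by
    rw [finner_prod_sum, finner_prod_sum, finner_prod_sum]
    simpa [sq] using Finset.sum_mul_sq_le_sq_mul_sq Finset.univ
      (fun q : n × m => A q.2 q.1) (fun q : n × m => B q.2 q.1)
  calc finner A B ≤ |finner A B| := le_abs_self _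
    _ = Real.sqrt (finner A B ^ 2) := (Real.sqrt_sq_eq_abs _).symm
    _ ≤ Real.sqrt (finner A A * finner B B) := Real.sqrt_le_sqrt key
    _ = fnorm A * fnorm B := Real.sqrt_mul (finner_self_nonneg A) _

lemma finner_expand (A B : Matrix m n ℝ) :
    finner (A + B) (A + B) = finner A A + 2 * finner A B + finner B B := by
  rw [finner_add_left, finner_add_right, finner_add_right, finner_comm B A]; ring

lemma fnorm_add_le (A B : Matrix m n ℝ) : fnorm (A + B) ≤ fnorm A + fnorm B := by
  have h : finner (A + B) (A + B) ≤ (fnorm A + fnorm B) ^ 2 := by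
    rw [finner_expand]
    have h1 := finner_le_fnorm_mul A B
    have h2 := fnorm_sq A
    have h3 := fnorm_sq B
    nlinarith
  calc fnorm (A + B) = Real.sqrt (finner (A + B) (A + B)) := rfl
    _ ≤ Real.sqrt ((fnorm A + fnorm B) ^ 2) := Real.sqrt_le_sqrt h
    _ = fnorm A + fnorm B :=
        Real.sqrt_sq (add_nonneg (fnorm_nonneg A) (fnorm_nonneg B))

lemma finner_self_eq_sq_sum (A : Matrix m n ℝ) :
    finner A A = ∑ i, ∑ j, A i j ^ 2 := by
  rw [finner_eq_sum, Finset.sum_comm]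
  simp [sq]

lemma fnorm_transpose (A : Matrix m n ℝ) : fnorm Aᵀ = fnorm A := by
  unfold fnorm
  congr 1
  rw [finner_self_eq_sq_sum, finner_self_eq_sq_sum, Finset.sum_comm]
  simp [Matrix.transpose_apply]

lemma fnorm_mul_le (A : Matrix m n ℝ) (B : Matrix n p ℝ) :
    fnorm (A * B) ≤ fnorm A * fnorm B := by
  have key : finner (A * B) (A * B) ≤ finner A A * finner B B := by
    rw [finner_self_eq_sq_sum, finner_self_eq_sq_sum, finner_self_eq_sq_sum]
    have hb : ∀ i j, (A * B) i j ^ 2 ≤ (∑ k, A i k ^ 2) * (∑ k, B k j ^ 2) := by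
      intro i j
      rw [Matrix.mul_apply]
      exact Finset.sum_mul_sq_le_sq_mul_sq Finset.univ (fun k => A i k) (fun k => B k j)
    calc ∑ i, ∑ j, (A * B) i j ^ 2
        ≤ ∑ i, ∑ j, (∑ k, A i k ^ 2) * (∑ k, B k j ^ 2) :=
          Finset.sum_le_sum fun i _ => Finset.sum_le_sum fun j _ => hb i j
      _ = (∑ i, ∑ k, A i k ^ 2) * (∑ j, ∑ k, B k j ^ 2) := by
          rw [Finset.sum_mul_sum]
      _ = (∑ i, ∑ k, A i k ^ 2) * (∑ k, ∑ j, B k j ^ 2) := by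
          rw [Finset.sum_comm (f := fun j k => B k j ^ 2)]
  calc fnorm (A * B) = Real.sqrt (finner (A * B) (A * B)) := rfl
    _ ≤ Real.sqrt (finner A A * finner B B) := Real.sqrt_le_sqrt key
    _ = fnorm A * fnorm B := Real.sqrt_mul (finner_self_nonneg A) _

lemma psd_trace_nonneg [DecidableEq m] {P : Matrix m m ℝ} (hP : P.PosSemidef) :
    0 ≤ P.trace := by
  exact hP.trace_nonneg

lemma psqrt_mul_self {r : ℕ} {M : Matrix (Fin r) (Fin r) ℝ} (hM : M.PosSemidef) :
    psqrt M * psqrt M = M := by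
  rw [psqrt, dif_pos hM]
  have hUU : (star hM.1.eigenvectorUnitary : Matrix (Fin r) (Fin r) ℝ) *
      (hM.1.eigenvectorUnitary : Matrix (Fin r) (Fin r) ℝ) = 1 := Unitary.coe_star_mul_self _
  have hDD : diagonal (Real.sqrt ∘ hM.1.eigenvalues) * diagonal (Real.sqrt ∘ hM.1.eigenvalues)
      = diagonal (RCLike.ofReal ∘ hM.1.eigenvalues) := by
    rw [diagonal_mul_diagonal]
    congr 1; funext i
    simp [Real.mul_self_sqrt (hM.eigenvalues_nonneg i)]
  conv_rhs => rw [hM.1.spectral_theorem, Unitary.conjStarAlgAut_apply]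
  rw [← hDD]
  simp only [Matrix.mul_assoc]
  rw [← Matrix.mul_assoc (star _ : Matrix (Fin r) (Fin r) ℝ), hUU, Matrix.one_mul]

lemma psqrt_transpose {r : ℕ} {M : Matrix (Fin r) (Fin r) ℝ} (hM : M.PosSemidef) :
    (psqrt M)ᵀ = psqrt M := by
  rw [psqrt, dif_pos hM]
  rw [Matrix.transpose_mul, Matrix.transpose_mul, Matrix.star_eq_conjTranspose,
    Matrix.conjTranspose_eq_transpose_of_trivial, Matrix.transpose_transpose,
    Matrix.diagonal_transpose, Matrix.mul_assoc]

lemma finner_mul_self_eq {q : ℕ} (X : Matrix m (Fin q) ℝ) (Y : Matrix (Fin q) n ℝ) :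
    finner (X * Y) (X * Y) = (X * (Y * Yᵀ) * Xᵀ).trace := by
  unfold finner
  rw [Matrix.trace_mul_comm, Matrix.transpose_mul]
  congr 1
  simp [Matrix.mul_assoc]

lemma posSemidef_transpose_mul_self' {q : ℕ} (R : Matrix n (Fin q) ℝ) :
    (Rᵀ * R).PosSemidef := by
  have h := Matrix.posSemidef_conjTranspose_mul_self R
  rwa [Matrix.conjTranspose_eq_transpose_of_trivial] at h

lemma fnorm_mul_transpose_eq {q : ℕ} (D : Matrix m (Fin q) ℝ) (R : Matrix n (Fin q) ℝ) :
    fnorm (D * Rᵀ) = fnorm (D * psqrt (Rᵀ * R)) := by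
  have hps := posSemidef_transpose_mul_self' R
  unfold fnorm
  rw [finner_mul_self_eq, finner_mul_self_eq, Matrix.transpose_transpose,
    psqrt_transpose hps, psqrt_mul_self hps]

/-- `M - c • 1` is PSD when `c` is below all eigenvalues of the hermitian `M`. -/
lemma sub_smul_one_posSemidef {q : ℕ} {M : Matrix (Fin q) (Fin q) ℝ}
    (hH : M.IsHermitian) (c : ℝ) (hc : ∀ i, c ≤ hH.eigenvalues i) :
    (M - c • (1 : Matrix (Fin q) (Fin q) ℝ)).PosSemidef := by
  classical
  have hspec := hH.spectral_theorem
  set U : Matrix (Fin q) (Fin q) ℝ :=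
    (Matrix.IsHermitian.eigenvectorUnitary hH : Matrix (Fin q) (Fin q) ℝ) with hU
  have hUU : U * star U = 1 :=
    Matrix.mem_unitaryGroup_iff.mp (Matrix.IsHermitian.eigenvectorUnitary hH).2
  have hconst : Matrix.diagonal (fun _ : Fin q => c) = c • (1 : Matrix (Fin q) (Fin q) ℝ) := by
    ext i j
    rcases eq_or_ne i j with rfl | h
    · simp [Matrix.diagonal_apply, Matrix.one_apply]
    · simp [Matrix.diagonal_apply, Matrix.one_apply, h]
  have hcU : U * Matrix.diagonal (fun _ : Fin q => c) * star U
      = c • (1 : Matrix (Fin q) (Fin q) ℝ) := by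
    rw [hconst, Matrix.mul_smul, Matrix.mul_one, Matrix.smul_mul, hUU]
  have hdiag : Matrix.diagonal (RCLike.ofReal ∘ hH.eigenvalues)
        - Matrix.diagonal (fun _ : Fin q => c)
      = Matrix.diagonal (fun i => hH.eigenvalues i - c) := by
    rw [← Matrix.diagonal_sub]
    simp [RCLike.ofReal_real_eq_id, Function.id_comp]
  have hsub : M - c • (1 : Matrix (Fin q) (Fin q) ℝ)
      = U * Matrix.diagonal (fun i => hH.eigenvalues i - c) * star U := by
    rw [← hdiag, Matrix.mul_sub, Matrix.sub_mul, hcU]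
    conv_lhs => rw [hspec, Unitary.conjStarAlgAut_apply]
  rw [hsub, Matrix.star_eq_conjTranspose]
  exact (Matrix.posSemidef_diagonal_iff.mpr
    (fun i => sub_nonneg.mpr (hc i))).mul_mul_conjTranspose_same U

lemma finner_mul_psqrt_ge [DecidableEq m] {q : ℕ} {M : Matrix (Fin q) (Fin q) ℝ}
    (hM : M.PosSemidef) (c : ℝ) (hc : ∀ i, c ≤ hM.isHermitian.eigenvalues i)
    (D : Matrix m (Fin q) ℝ) :
    c * finner D D ≤ finner (D * psqrt M) (D * psqrt M) := by
  rw [finner_mul_self_eq, psqrt_transpose hM, psqrt_mul_self hM]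
  have hpsd := (sub_smul_one_posSemidef hM.isHermitian c hc).mul_mul_conjTranspose_same D
  rw [Matrix.conjTranspose_eq_transpose_of_trivial] at hpsd
  have htr := psd_trace_nonneg hpsd
  have hexp : (D * (M - c • (1 : Matrix (Fin q) (Fin q) ℝ)) * Dᵀ).trace
      = (D * M * Dᵀ).trace - c * finner D D := by
    rw [Matrix.mul_sub, Matrix.sub_mul, Matrix.trace_sub]
    congr 1
    have h1 : D * (c • (1 : Matrix (Fin q) (Fin q) ℝ)) * Dᵀ = c • (D * Dᵀ) := by
      rw [Matrix.mul_smul, Matrix.mul_one, Matrix.smul_mul]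
    rw [h1, Matrix.trace_smul, Matrix.trace_mul_comm]
    simp [finner, smul_eq_mul]
  linarith

lemma scalar_key (p s e : ℝ) (hp : 0 ≤ p) (he : 0 ≤ e)
    (h2 : Real.sqrt 2 ^ 2 = 2) (h2a : 1 ≤ Real.sqrt 2) (h2b : Real.sqrt 2 ≤ 2) :
    e * (p ^ 2 / (2 * s ^ 2)) + 1 / 2 * (Real.sqrt 2 * p + p ^ 2 / (2 * s ^ 2)) ^ 2
      ≤ (2 + p ^ 2 / (2 * s ^ 4) + Real.sqrt 2 * e / s ^ 2 + 2 * p / s ^ 2) / 2 * p ^ 2 := by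
  rcases eq_or_ne s 0 with rfl | hs
  · simp only [ne_eq, OfNat.ofNat_ne_zero, not_false_eq_true, zero_pow, mul_zero, div_zero,
      add_zero, mul_zero]
    nlinarith [sq_nonneg p, sq_nonneg (Real.sqrt 2 * p), mul_nonneg he (sq_nonneg p)]
  · set t := p ^ 2 / (2 * s ^ 2) with htdef
    have htnn : 0 ≤ t := by positivity
    have hpt : 0 ≤ p * t := mul_nonneg hp htnn
    have het : 0 ≤ e * t := mul_nonneg he htnn
    have hexp : (2 + p ^ 2 / (2 * s ^ 4) + Real.sqrt 2 * e / s ^ 2 + 2 * p / s ^ 2) / 2 * p ^ 2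
        = p ^ 2 + t ^ 2 + Real.sqrt 2 * (e * t) + 2 * (p * t) := by
      rw [htdef]; field_simp
    have hexp2 : e * t + 1 / 2 * (Real.sqrt 2 * p + t) ^ 2
        = e * t + p ^ 2 + Real.sqrt 2 * (p * t) + t ^ 2 / 2 := by
      rw [add_sq, mul_pow, h2]; ring
    rw [hexp, hexp2]
    have h5 : Real.sqrt 2 * (p * t) ≤ 2 * (p * t) := mul_le_mul_of_nonneg_right h2b hpt
    have h6 : e * t ≤ Real.sqrt 2 * (e * t) := by nlinarith [het]
    nlinarith [sq_nonneg t]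

end aux

set_option maxHeartbeats 4000000 in
/-- matrix form of the paper's Lemma 2.
Descent-lemma-type expansion of the factorization loss along an update `(D1, D2)`
measured in the ScaledGD local norm `‖·‖_P`. -/
theorem stmt_1 {n1 n2 r : ℕ}
    (Xstar : Matrix (Fin n1) (Fin n2) ℝ)
    (L : Matrix (Fin n1) (Fin r) ℝ) (R : Matrix (Fin n2) (Fin r) ℝ)
    (hL : (Lᵀ * L).PosDef) (hR : (Rᵀ * R).PosDef)
    (D1 : Matrix (Fin n1) (Fin r) ℝ) (D2 : Matrix (Fin n2) (Fin r) ℝ)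
    (E : Matrix (Fin n1) (Fin n2) ℝ) (hE : E = L * Rᵀ - Xstar)
    (normP : ℝ)
    (hnormP : normP =
      Real.sqrt (fnorm (D1 * psqrt (Rᵀ * R)) ^ 2 + fnorm (D2 * psqrt (Lᵀ * L)) ^ 2))
    (σmin : ℝ)
    (hσmin : σmin = min (Real.sqrt (lammin (Lᵀ * L))) (Real.sqrt (lammin (Rᵀ * R))))
    (CP : ℝ)
    (hCP : CP = 2 + normP ^ 2 / (2 * σmin ^ 4) + Real.sqrt 2 * fnorm E / σmin ^ 2
      + 2 * normP / σmin ^ 2) :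
    1 / 2 * fnorm ((L + D1) * (R + D2)ᵀ - Xstar) ^ 2 ≤
      1 / 2 * fnorm E ^ 2 + finner E (D1 * Rᵀ + L * D2ᵀ) + CP / 2 * normP ^ 2 := by
  rcases Nat.eq_zero_or_pos r with hr | hr
  · subst hr
    have h0 : ∀ {k l : ℕ} (A : Matrix (Fin k) (Fin 0) ℝ) (B : Matrix (Fin 0) (Fin l) ℝ),
        A * B = 0 := by
      intro k l A B; ext i j; simp [Matrix.mul_apply]
    have hf0 : ∀ {k : ℕ} (A : Matrix (Fin k) (Fin 0) ℝ), fnorm A = 0 := by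
      intro k A; simp [fnorm, finner_eq_sum]
    have hgoalL : (L + D1) * (R + D2)ᵀ - Xstar = E := by rw [h0, hE, h0]
    have hfin0 : finner E (D1 * Rᵀ + L * D2ᵀ) = 0 := by
      rw [h0, h0, add_zero, finner_eq_sum]; simp
    have hnp : normP = 0 := by rw [hnormP, hf0, hf0]; simp
    rw [hgoalL, hfin0, hnp]
    norm_num
  · haveI : Nonempty (Fin r) := ⟨⟨0, hr⟩⟩
    have hRps : (Rᵀ * R).PosSemidef := hR.posSemidef
    have hLps : (Lᵀ * L).PosSemidef := hL.posSemidef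
    set a := fnorm (D1 * psqrt (Rᵀ * R)) with ha
    set b := fnorm (D2 * psqrt (Lᵀ * L)) with hb
    set d1 := fnorm D1 with hd1def
    set d2 := fnorm D2 with hd2def
    set e := fnorm E with hedef
    -- eigenvalue facts
    have hlamR : 0 < lammin (Rᵀ * R) := by
      unfold lammin
      rw [dif_pos hRps.isHermitian]
      obtain ⟨i, hi⟩ := exists_eq_ciInf_of_finite (f := hRps.isHermitian.eigenvalues)
      rw [← hi]
      exact hR.eigenvalues_pos i
    have hlamL : 0 < lammin (Lᵀ * L) := by
      unfold lammin
      rw [dif_pos hLps.isHermitian]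
      obtain ⟨i, hi⟩ := exists_eq_ciInf_of_finite (f := hLps.isHermitian.eigenvalues)
      rw [← hi]
      exact hL.eigenvalues_pos i
    have hminR : ∀ i, lammin (Rᵀ * R) ≤ hRps.isHermitian.eigenvalues i := by
      intro i
      unfold lammin
      rw [dif_pos hRps.isHermitian]
      exact ciInf_le (Finite.bddBelow_range _) i
    have hminL : ∀ i, lammin (Lᵀ * L) ≤ hLps.isHermitian.eigenvalues i := by
      intro i
      unfold lammin
      rw [dif_pos hLps.isHermitian]
      exact ciInf_le (Finite.bddBelow_range _) i
    have hσpos : 0 < σmin := by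
      rw [hσmin]
      exact lt_min (Real.sqrt_pos.mpr hlamL) (Real.sqrt_pos.mpr hlamR)
    have hσ2R : σmin ^ 2 ≤ lammin (Rᵀ * R) := by
      calc σmin ^ 2 ≤ Real.sqrt (lammin (Rᵀ * R)) ^ 2 :=
            pow_le_pow_left₀ hσpos.le (hσmin ▸ min_le_right _ _) 2
        _ = lammin (Rᵀ * R) := Real.sq_sqrt hlamR.le
    have hσ2L : σmin ^ 2 ≤ lammin (Lᵀ * L) := by
      calc σmin ^ 2 ≤ Real.sqrt (lammin (Lᵀ * L)) ^ 2 :=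
            pow_le_pow_left₀ hσpos.le (hσmin ▸ min_le_left _ _) 2
        _ = lammin (Lᵀ * L) := Real.sq_sqrt hlamL.le
    -- quadratic lower bounds
    have had1 : σmin ^ 2 * d1 ^ 2 ≤ a ^ 2 := by
      have h1 : lammin (Rᵀ * R) * d1 ^ 2 ≤ a ^ 2 := by
        rw [ha, hd1def, fnorm_sq, fnorm_sq]
        exact finner_mul_psqrt_ge hRps _ hminR D1
      nlinarith [sq_nonneg d1]
    have hbd2 : σmin ^ 2 * d2 ^ 2 ≤ b ^ 2 := by
      have h1 : lammin (Lᵀ * L) * d2 ^ 2 ≤ b ^ 2 := by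
        rw [hb, hd2def, fnorm_sq, fnorm_sq]
        exact finner_mul_psqrt_ge hLps _ hminL D2
      nlinarith [sq_nonneg d2]
    -- norm identities
    have haR : fnorm (D1 * Rᵀ) = a := fnorm_mul_transpose_eq D1 R
    have hbL : fnorm (L * D2ᵀ) = b := by
      have h1 : L * D2ᵀ = (D2 * Lᵀ)ᵀ := by
        rw [Matrix.transpose_mul, Matrix.transpose_transpose]
      rw [h1, fnorm_transpose]
      exact fnorm_mul_transpose_eq D2 L
    have hp2 : normP ^ 2 = a ^ 2 + b ^ 2 := by
      rw [hnormP]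
      exact Real.sq_sqrt (by positivity)
    have hpnn : 0 ≤ normP := by rw [hnormP]; exact Real.sqrt_nonneg _
    -- expansion
    have hFeq : (L + D1) * (R + D2)ᵀ - Xstar
        = E + ((D1 * Rᵀ + L * D2ᵀ) + D1 * D2ᵀ) := by
      rw [hE, Matrix.transpose_add, Matrix.add_mul, Matrix.mul_add, Matrix.mul_add]
      abel
    set G := D1 * Rᵀ + L * D2ᵀ with hG
    set H := D1 * D2ᵀ with hH
    set K := G + H with hK
    rw [hFeq, fnorm_sq, finner_expand]
    have hEK : finner E K = finner E G + finner E H := by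
      rw [hK]; exact finner_add_right E G H
    have hEE : finner E E = e ^ 2 := (fnorm_sq E).symm
    -- bounds
    have hHle : fnorm H ≤ d1 * d2 := by
      calc fnorm H ≤ fnorm D1 * fnorm D2ᵀ := fnorm_mul_le D1 D2ᵀ
        _ = d1 * d2 := by rw [fnorm_transpose]
    have hEH : finner E H ≤ e * (d1 * d2) :=
      le_trans (finner_le_fnorm_mul E H)
        (mul_le_mul_of_nonneg_left hHle (fnorm_nonneg E))
    have hGle : fnorm G ≤ a + b := by
      calc fnorm G ≤ fnorm (D1 * Rᵀ) + fnorm (L * D2ᵀ) := fnorm_add_le _ _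
        _ = a + b := by rw [haR, hbL]
    have hHnn : 0 ≤ fnorm H := fnorm_nonneg H
    have hd12nn : 0 ≤ d1 * d2 := mul_nonneg (fnorm_nonneg D1) (fnorm_nonneg D2)
    have habnn : 0 ≤ a + b := add_nonneg (fnorm_nonneg _) (fnorm_nonneg _)
    have hKle : fnorm K ≤ (a + b) + d1 * d2 :=
      le_trans (fnorm_add_le G H) (add_le_add hGle hHle)
    have hKK : finner K K ≤ ((a + b) + d1 * d2) ^ 2 := by
      rw [← fnorm_sq]
      exact pow_le_pow_left₀ (fnorm_nonneg K) hKle 2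
    have hab : a + b ≤ Real.sqrt 2 * normP := by
      have h1 : (a + b) ^ 2 ≤ 2 * normP ^ 2 := by nlinarith [sq_nonneg (a - b)]
      calc a + b = Real.sqrt ((a + b) ^ 2) := (Real.sqrt_sq habnn).symm
        _ ≤ Real.sqrt (2 * normP ^ 2) := Real.sqrt_le_sqrt h1
        _ = Real.sqrt 2 * normP := by
            rw [Real.sqrt_mul (by norm_num), Real.sqrt_sq hpnn]
    have hd12 : d1 * d2 ≤ normP ^ 2 / (2 * σmin ^ 2) := by
      rw [le_div_iff₀ (by positivity)]
      nlinarith [mul_nonneg (sq_nonneg σmin) (sq_nonneg (d1 - d2))]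
    have henn : 0 ≤ e := fnorm_nonneg E
    -- the purely scalar final inequality
    clear_value a b d1 d2 e
    have h2 : Real.sqrt 2 ^ 2 = 2 := Real.sq_sqrt (by norm_num)
    have h2a : 1 ≤ Real.sqrt 2 := by nlinarith [Real.sqrt_nonneg 2]
    have h2b : Real.sqrt 2 ≤ 2 := by nlinarith [Real.sqrt_nonneg 2]
    have key : e * (normP ^ 2 / (2 * σmin ^ 2))
        + 1 / 2 * (Real.sqrt 2 * normP + normP ^ 2 / (2 * σmin ^ 2)) ^ 2
        ≤ CP / 2 * normP ^ 2 := by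
      rw [hCP]
      exact scalar_key normP σmin e hpnn henn h2 h2a h2b
    have hfinal : finner E H + 1 / 2 * finner K K ≤ CP / 2 * normP ^ 2 := by
      have hstep : (a + b) + d1 * d2
          ≤ Real.sqrt 2 * normP + normP ^ 2 / (2 * σmin ^ 2) := add_le_add hab hd12
      have hsq : ((a + b) + d1 * d2) ^ 2
          ≤ (Real.sqrt 2 * normP + normP ^ 2 / (2 * σmin ^ 2)) ^ 2 :=
        pow_le_pow_left₀ (by positivity) hstep 2
      have he_t : e * (d1 * d2) ≤ e * (normP ^ 2 / (2 * σmin ^ 2)) :=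
        mul_le_mul_of_nonneg_left hd12 henn
      linarith
    linarith [hEE, hEK, hfinal]
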